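/- Let q = 2^t and let F : 𝔽₂ⁿ → ℤ_q^m be a vectorial gbent function with m = n/(2t). Then the set R = {(x, F(x)) : x ∈ 𝔽₂ⁿ} is a (2^n, 2^{n/2}, 2^n, 2^{n/2})-relative difference set in the abelian group 𝔽₂ⁿ × ℤ_q^m relative to the subgroup N = {0} × ℤ_q^m; that is, every element of (𝔽₂ⁿ × ℤ_q^m) ∖ N can be written in exactly 2^{n/2} ways as a difference r₁ − r₂ with r₁, r₂ ∈ R, and no nonzero element of N has such a representation. -/

import Mathlib

open scoped BigOperators

/-- `ζ_q = e^{2πi/q}`. -/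
noncomputable def zeta (q : ℕ) : ℂ := Complex.exp (2 * Real.pi * Complex.I / q)

/-- The standard inner product `⟨u,x⟩ = Σᵢ uᵢxᵢ` on `𝔽₂ⁿ`. -/
def ip {n : ℕ} (u x : Fin n → ZMod 2) : ZMod 2 := ∑ i, u i * x i

/-- The generalized Walsh–Hadamard transform
`H_f(u) = Σ_x ζ_q^{f(x)} (−1)^{⟨u,x⟩}` of `f : 𝔽₂ⁿ → ℤ_q`. -/
noncomputable def gWHT {n q : ℕ} (f : (Fin n → ZMod 2) → ZMod q) (u : Fin n → ZMod 2) : ℂ :=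
  ∑ x : Fin n → ZMod 2, zeta q ^ (f x).val * (-1 : ℂ) ^ (ip u x).val

/-- `f` is gbent if `|H_f(u)| = 2^{n/2}` for all `u`. -/
def IsGbent {n q : ℕ} (f : (Fin n → ZMod 2) → ZMod q) : Prop :=
  ∀ u, ‖gWHT f u‖ = (2 : ℝ) ^ ((n : ℝ) / 2)

/-- `g` is the dual of `f`: `H_f(u) = 2^{n/2} ζ_q^{g(u)}` for all `u`. -/
def IsDualOf {n q : ℕ} (g f : (Fin n → ZMod 2) → ZMod q) : Prop :=
  ∀ u, gWHT f u = ((2 : ℝ) ^ ((n : ℝ) / 2) : ℝ) * zeta q ^ (g u).val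

/-- `f` is a regular gbent function:
`H_f(u) = 2^{n/2} ζ_q^{j_u}` for some `j_u ∈ ℤ_q`, for every `u`. -/
def IsRegularGbent {n q : ℕ} (f : (Fin n → ZMod 2) → ZMod q) : Prop :=
  IsGbent f ∧ ∀ u, ∃ j : ZMod q, gWHT f u = ((2 : ℝ) ^ ((n : ℝ) / 2) : ℝ) * zeta q ^ j.val

/-- The orthogonal complement of a subspace `U ⊆ 𝔽₂ⁿ` w.r.t. `⟨·,·⟩`. -/
def orthComp {n : ℕ} (U : Submodule (ZMod 2) (Fin n → ZMod 2)) : Set (Fin n → ZMod 2) :=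
  {u | ∀ x ∈ U, ip u x = 0}

/-- `F : 𝔽₂ⁿ → ℤ_q^m` is vectorial gbent if every component function
`c·F`, `c ≠ 0`, is gbent. -/
def IsVectorialGbent {n q m : ℕ} (F : (Fin n → ZMod 2) → Fin m → ZMod q) : Prop :=
  ∀ c : Fin m → ZMod q, c ≠ 0 → IsGbent (fun x => ∑ j, c j * F x j)

lemma zeta_prim {q : ℕ} (hq : q ≠ 0) : IsPrimitiveRoot (zeta q) q :=
  Complex.isPrimitiveRoot_exp q hq

lemma zeta_pow_self {q : ℕ} (hq : q ≠ 0) : zeta q ^ q = 1 := (zeta_prim hq).pow_eq_one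

lemma pow_val_add {q : ℕ} [NeZero q] {ω : ℂ} (hω : ω ^ q = 1) (a b : ZMod q) :
    ω ^ (a + b).val = ω ^ a.val * ω ^ b.val := by
  rw [← pow_add, ZMod.val_add]
  conv_rhs => rw [← Nat.div_add_mod (a.val + b.val) q]
  rw [pow_add, pow_mul, hω, one_pow, one_mul]

lemma zeta_pow_val_eq_one_iff {q : ℕ} [NeZero q] (a : ZMod q) :
    zeta q ^ a.val = 1 ↔ a = 0 := by
  rw [(zeta_prim (NeZero.ne q)).pow_eq_one_iff_dvd]
  constructor
  · intro h
    have := Nat.eq_zero_of_dvd_of_lt h (ZMod.val_lt a)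
    · exact (ZMod.val_eq_zero a).mp (by omega)
  · rintro rfl; simp

noncomputable def chiV (q m : ℕ) [NeZero q] (d : Fin m → ZMod q) :
    AddChar (Fin m → ZMod q) ℂ where
  toFun c := zeta q ^ (∑ j, c j * d j).val
  map_zero_eq_one' := by simp
  map_add_eq_mul' a b := by
    have h : (∑ j, (a + b) j * d j) = (∑ j, a j * d j) + (∑ j, b j * d j) := by
      rw [← Finset.sum_add_distrib]
      exact Finset.sum_congr rfl (fun j _ => by simp [add_mul])
    simp only [h]
    exact pow_val_add (zeta_pow_self (NeZero.ne q)) _ _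

lemma sum_single_mul {q m : ℕ} [NeZero q] (j : Fin m) (d : Fin m → ZMod q) :
    (∑ i, (Pi.single j (1 : ZMod q) : Fin m → ZMod q) i * d i) = d j := by
  rw [Finset.sum_eq_single j]
  · simp
  · intro i _ hij; simp [Pi.single_apply, hij]
  · simp

lemma sum_chiV_eq {q m : ℕ} [NeZero q] (e : Fin m → ZMod q) :
    (∑ c : Fin m → ZMod q, zeta q ^ (∑ j, c j * e j).val)
      = if e = 0 then ((q : ℂ) ^ m) else 0 := by
  split_ifs with h
  · subst h
    simp [Finset.card_univ, ZMod.card]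
  · have hne : chiV q m e ≠ 1 := by
      rw [AddChar.ne_one_iff]
      obtain ⟨j, hj⟩ := Function.ne_iff.mp h
      refine ⟨Pi.single j 1, ?_⟩
      show zeta q ^ (∑ i, (Pi.single j (1 : ZMod q) : Fin m → ZMod q) i * e i).val ≠ 1
      rw [sum_single_mul]
      rw [Ne, zeta_pow_val_eq_one_iff]
      simpa using hj
    exact AddChar.sum_eq_zero_of_ne_one hne

noncomputable def sgnChar (n : ℕ) (z : Fin n → ZMod 2) :
    AddChar (Fin n → ZMod 2) ℂ where
  toFun u := (-1 : ℂ) ^ (ip u z).val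
  map_zero_eq_one' := by simp [ip]
  map_add_eq_mul' a b := by
    have h : ip (a + b) z = ip a z + ip b z := by
      simp only [ip, ← Finset.sum_add_distrib]
      exact Finset.sum_congr rfl (fun i _ => by simp [add_mul])
    simp only [h]
    exact pow_val_add (by norm_num : (-1 : ℂ) ^ 2 = 1) _ _

lemma sum_sgn {n : ℕ} (z : Fin n → ZMod 2) :
    (∑ u : Fin n → ZMod 2, (-1 : ℂ) ^ (ip u z).val)
      = if z = 0 then ((2 : ℂ) ^ n) else 0 := by
  split_ifs with h
  · subst h
    simp [ip, Finset.card_univ, ZMod.card]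
  · have hne : sgnChar n z ≠ 1 := by
      rw [AddChar.ne_one_iff]
      obtain ⟨j, hj⟩ := Function.ne_iff.mp h
      refine ⟨Pi.single j 1, ?_⟩
      show (-1 : ℂ) ^ (ip (Pi.single j 1) z).val ≠ 1
      have h2 : ip (Pi.single j 1) z = z j := sum_single_mul j z
      rw [h2]
      have hz : z j = 1 := by
        have h01 : ∀ w : ZMod 2, w = 0 ∨ w = 1 := by decide
        rcases h01 (z j) with h' | h'
        · exact absurd h' hj
        · exact h'
      rw [hz]
      norm_num [ZMod.val_one]
    exact AddChar.sum_eq_zero_of_ne_one hne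

lemma abs_zeta_pow {q : ℕ} (hq : q ≠ 0) (k : ℕ) : ‖zeta q ^ k‖ = 1 := by
  have h : zeta q = Complex.exp (((2 * Real.pi / q : ℝ) : ℂ) * Complex.I) := by
    unfold zeta; push_cast; ring_nf
  rw [norm_pow, h, Complex.norm_exp_ofReal_mul_I, one_pow]

lemma conj_zeta_pow {q : ℕ} [NeZero q] (v : ZMod q) :
    (starRingEnd ℂ) (zeta q ^ v.val) = zeta q ^ (-v).val := by
  have h1 : zeta q ^ v.val * zeta q ^ (-v).val = 1 := by
    rw [← pow_val_add (zeta_pow_self (NeZero.ne q))]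
    simp
  have h2 : zeta q ^ (-v).val = (zeta q ^ v.val)⁻¹ := eq_inv_of_mul_eq_one_right h1
  rw [h2, Complex.inv_eq_conj (abs_zeta_pow (NeZero.ne q) _)]

lemma gbent_mul_conj {n q : ℕ} {f : (Fin n → ZMod 2) → ZMod q} (hf : IsGbent f)
    (u : Fin n → ZMod 2) :
    gWHT f u * (starRingEnd ℂ) (gWHT f u) = (2 : ℂ) ^ n := by
  rw [Complex.mul_conj, Complex.normSq_eq_norm_sq, hf u]
  have : ((2 : ℝ) ^ ((n : ℝ) / 2)) ^ 2 = (2 : ℝ) ^ n := by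
    rw [← Real.rpow_natCast ((2:ℝ) ^ ((n:ℝ)/2)) 2, ← Real.rpow_mul (by norm_num)]
    norm_num
  rw [this]
  push_cast
  ring

lemma pneg_eq {n : ℕ} (v : Fin n → ZMod 2) : -v = v :=
  funext fun i => CharTwo.neg_eq (v i)

lemma add_self_zero {n : ℕ} (v : Fin n → ZMod 2) : v + v = 0 :=
  funext fun i => CharTwo.add_self_eq_zero (v i)

lemma cond_iff {n : ℕ} (a x y : Fin n → ZMod 2) : x + y + a = 0 ↔ y = x + a := by
  constructor
  · intro h
    have h' : y + (x + a) = 0 := by rw [← h]; abel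
    have h2 : y = -(x + a) := eq_neg_of_add_eq_zero_left h'
    rwa [pneg_eq] at h2
  · rintro rfl
    calc x + (x + a) + a = (x + x) + (a + a) := by abel
      _ = 0 := by rw [add_self_zero, add_self_zero, add_zero]

lemma ip_add_right {n : ℕ} (u x y : Fin n → ZMod 2) : ip u (x + y) = ip u x + ip u y := by
  simp only [ip, ← Finset.sum_add_distrib]
  exact Finset.sum_congr rfl fun i _ => by simp [mul_add]

lemma autocorr {n q : ℕ} [NeZero q] {f : (Fin n → ZMod 2) → ZMod q} (hf : IsGbent f)
    {a : Fin n → ZMod 2} (ha : a ≠ 0) :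
    ∑ x : Fin n → ZMod 2, zeta q ^ (f x - f (x + a)).val = 0 := by
  have hm1 : (-1 : ℂ) ^ (2 : ℕ) = 1 := by norm_num
  have hsgn : ∀ u x y : Fin n → ZMod 2,
      (-1:ℂ) ^ (ip u x).val * (-1:ℂ) ^ (ip u y).val * (-1:ℂ) ^ (ip u a).val
        = (-1:ℂ) ^ (ip u (x + y + a)).val := by
    intro u x y
    rw [ip_add_right, ip_add_right, pow_val_add hm1, pow_val_add hm1]
  have hConj : ∀ u, (starRingEnd ℂ) (gWHT f u)
      = ∑ y : Fin n → ZMod 2, zeta q ^ (-(f y)).val * (-1:ℂ) ^ (ip u y).val := by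
    intro u
    rw [gWHT, map_sum]
    refine Finset.sum_congr rfl fun y _ => ?_
    rw [map_mul, conj_zeta_pow]
    congr 1
    rw [map_pow]
    simp
  set T := ∑ u : Fin n → ZMod 2,
      gWHT f u * (starRingEnd ℂ) (gWHT f u) * (-1:ℂ) ^ (ip u a).val with hT
  have hT0 : T = 0 := by
    calc T = ∑ u : Fin n → ZMod 2, (2:ℂ)^n * (-1:ℂ) ^ (ip u a).val :=
          Finset.sum_congr rfl fun u _ => by rw [gbent_mul_conj hf]
      _ = (2:ℂ)^n * ∑ u : Fin n → ZMod 2, (-1:ℂ) ^ (ip u a).val := by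
          rw [Finset.mul_sum]
      _ = 0 := by rw [sum_sgn, if_neg ha, mul_zero]
  have hered : ∀ u, gWHT f u * (starRingEnd ℂ) (gWHT f u) * (-1:ℂ) ^ (ip u a).val
      = ∑ x : Fin n → ZMod 2, ∑ y : Fin n → ZMod 2,
          (zeta q ^ (f x).val * zeta q ^ (-(f y)).val) * (-1:ℂ) ^ (ip u (x + y + a)).val := by
    intro u
    rw [hConj u, gWHT, Finset.sum_mul_sum, Finset.sum_mul]
    refine Finset.sum_congr rfl fun x _ => ?_
    rw [Finset.sum_mul]
    refine Finset.sum_congr rfl fun y _ => ?_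
    rw [← hsgn u x y]
    ring
  have hT2 : T = ∑ x : Fin n → ZMod 2, ∑ y : Fin n → ZMod 2,
      (zeta q ^ (f x).val * zeta q ^ (-(f y)).val)
        * (if x + y + a = 0 then (2:ℂ)^n else 0) := by
    calc T = ∑ u : Fin n → ZMod 2, ∑ x : Fin n → ZMod 2, ∑ y : Fin n → ZMod 2,
          (zeta q ^ (f x).val * zeta q ^ (-(f y)).val) * (-1:ℂ) ^ (ip u (x + y + a)).val :=
          Finset.sum_congr rfl fun u _ => hered u
      _ = ∑ x : Fin n → ZMod 2, ∑ y : Fin n → ZMod 2, ∑ u : Fin n → ZMod 2,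
          (zeta q ^ (f x).val * zeta q ^ (-(f y)).val) * (-1:ℂ) ^ (ip u (x + y + a)).val := by
          rw [Finset.sum_comm]
          exact Finset.sum_congr rfl fun x _ => Finset.sum_comm
      _ = ∑ x : Fin n → ZMod 2, ∑ y : Fin n → ZMod 2,
          (zeta q ^ (f x).val * zeta q ^ (-(f y)).val)
            * ∑ u : Fin n → ZMod 2, (-1:ℂ) ^ (ip u (x + y + a)).val := by
          refine Finset.sum_congr rfl fun x _ => Finset.sum_congr rfl fun y _ => ?_
          rw [Finset.mul_sum]
      _ = _ := by
          refine Finset.sum_congr rfl fun x _ => Finset.sum_congr rfl fun y _ => ?_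
          rw [sum_sgn]
  have hT3 : T = ∑ x : Fin n → ZMod 2, (2:ℂ)^n * zeta q ^ (f x - f (x + a)).val := by
    rw [hT2]
    refine Finset.sum_congr rfl fun x _ => ?_
    have hstep : ∀ y : Fin n → ZMod 2,
        (zeta q ^ (f x).val * zeta q ^ (-(f y)).val) * (if x + y + a = 0 then (2:ℂ)^n else 0)
          = if y = x + a then (zeta q ^ (f x).val * zeta q ^ (-(f y)).val) * (2:ℂ)^n else 0 := by
      intro y
      simp only [cond_iff a x y]
      split_ifs with h
      · rfl
      · rw [mul_zero]
    rw [Finset.sum_congr rfl fun y _ => hstep y,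
      Finset.sum_ite_eq' Finset.univ (x + a)
        (fun y => (zeta q ^ (f x).val * zeta q ^ (-(f y)).val) * (2:ℂ)^n),
      if_pos (Finset.mem_univ _),
      ← pow_val_add (zeta_pow_self (NeZero.ne q)) (f x) (-(f (x + a))),
      ← sub_eq_add_neg]
    ring
  have hfin : (2:ℂ)^n * ∑ x : Fin n → ZMod 2, zeta q ^ (f x - f (x + a)).val = 0 := by
    rw [Finset.mul_sum, ← hT3, hT0]
  have h2 : ((2:ℂ)^n) ≠ 0 := pow_ne_zero n two_ne_zero
  exact (mul_eq_zero.mp hfin).resolve_left h2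

lemma psub_eq_padd {n : ℕ} (v w : Fin n → ZMod 2) : v - w = v + w := by
  rw [sub_eq_add_neg, pneg_eq]

lemma sub_cond {n : ℕ} (x y a : Fin n → ZMod 2) : x - y = a ↔ y = x + a := by
  rw [psub_eq_padd]
  constructor
  · intro h
    have h2 := congrArg (fun w => x + w) h
    simpa [← add_assoc, add_self_zero] using h2
  · rintro rfl
    rw [← add_assoc, add_self_zero, zero_add]

lemma count_key {n t m : ℕ} (F : (Fin n → ZMod 2) → Fin m → ZMod (2 ^ t))
    (hF : IsVectorialGbent F) {a : Fin n → ZMod 2} (ha : a ≠ 0) (b : Fin m → ZMod (2 ^ t)) :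
    (((2 ^ t : ℕ) : ℂ)) ^ m * (((Finset.univ.filter
        (fun x : Fin n → ZMod 2 => F x - F (x + a) = b)).card : ℕ) : ℂ) = (2 : ℂ) ^ n := by
  haveI : NeZero (2 ^ t) := ⟨(Nat.two_pow_pos t).ne'⟩
  set S := Finset.univ.filter (fun x : Fin n → ZMod 2 => F x - F (x + a) = b) with hS
  have h1 : (∑ x : Fin n → ZMod 2, if F x - F (x + a) = b then ((2 ^ t : ℕ) : ℂ) ^ m else 0)
      = ((2 ^ t : ℕ) : ℂ) ^ m * (S.card : ℂ) := by
    rw [← Finset.sum_filter, Finset.sum_const, nsmul_eq_mul, mul_comm]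
  have h2 : ∀ x : Fin n → ZMod 2,
      (if F x - F (x + a) = b then ((2 ^ t : ℕ) : ℂ) ^ m else 0)
        = ∑ c : Fin m → ZMod (2 ^ t), zeta (2 ^ t) ^ (∑ j, c j * (F x j - F (x + a) j - b j)).val := by
    intro x
    have hiff : ((fun j => F x j - F (x + a) j - b j) = 0) ↔ (F x - F (x + a) = b) := by
      rw [show (fun j => F x j - F (x + a) j - b j) = (F x - F (x + a) - b) from rfl,
        sub_eq_zero]
    rw [sum_chiV_eq, if_congr hiff rfl rfl]
  have h4 : ∀ c : Fin m → ZMod (2 ^ t), c ≠ 0 →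
      (∑ x : Fin n → ZMod 2, zeta (2 ^ t) ^ (∑ j, c j * (F x j - F (x + a) j - b j)).val) = 0 := by
    intro c hc
    have hexp : ∀ x : Fin n → ZMod 2, (∑ j, c j * (F x j - F (x + a) j - b j))
        = ((∑ j, c j * F x j) - (∑ j, c j * F (x + a) j)) + (-(∑ j, c j * b j)) := by
      intro x
      rw [← sub_eq_add_neg, ← Finset.sum_sub_distrib, ← Finset.sum_sub_distrib]
      exact Finset.sum_congr rfl fun j _ => by ring
    calc (∑ x : Fin n → ZMod 2, zeta (2 ^ t) ^ (∑ j, c j * (F x j - F (x + a) j - b j)).val)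
        = ∑ x : Fin n → ZMod 2,
            zeta (2 ^ t) ^ ((∑ j, c j * F x j) - (∑ j, c j * F (x + a) j)).val
              * zeta (2 ^ t) ^ (-(∑ j, c j * b j)).val := by
          refine Finset.sum_congr rfl fun x _ => ?_
          rw [hexp x, pow_val_add (zeta_pow_self (NeZero.ne (2 ^ t)))]
      _ = (∑ x : Fin n → ZMod 2,
            zeta (2 ^ t) ^ ((∑ j, c j * F x j) - (∑ j, c j * F (x + a) j)).val)
              * zeta (2 ^ t) ^ (-(∑ j, c j * b j)).val := by rw [Finset.sum_mul]
      _ = 0 := by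
          have h0 := autocorr (q := 2 ^ t) (f := fun x => ∑ j, c j * F x j) (hF c hc) ha
          rw [h0, zero_mul]
  have h5 : (∑ x : Fin n → ZMod 2,
      zeta (2 ^ t) ^ (∑ j, (0 : Fin m → ZMod (2 ^ t)) j * (F x j - F (x + a) j - b j)).val) = (2 : ℂ) ^ n := by
    simp [Finset.card_univ, ZMod.card]
  calc ((2 ^ t : ℕ) : ℂ) ^ m * (S.card : ℂ)
      = ∑ x : Fin n → ZMod 2, (if F x - F (x + a) = b then ((2 ^ t : ℕ) : ℂ) ^ m else 0) := h1.symm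
    _ = ∑ x : Fin n → ZMod 2, ∑ c : Fin m → ZMod (2 ^ t),
          zeta (2 ^ t) ^ (∑ j, c j * (F x j - F (x + a) j - b j)).val :=
        Finset.sum_congr rfl fun x _ => h2 x
    _ = ∑ c : Fin m → ZMod (2 ^ t), ∑ x : Fin n → ZMod 2,
          zeta (2 ^ t) ^ (∑ j, c j * (F x j - F (x + a) j - b j)).val := Finset.sum_comm
    _ = (2 : ℂ) ^ n := by
        rw [← Finset.sum_erase_add Finset.univ _ (Finset.mem_univ (0 : Fin m → ZMod (2 ^ t))),
          Finset.sum_eq_zero (fun c hc => h4 c (Finset.ne_of_mem_erase hc)), zero_add]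
        simp [Finset.card_univ, ZMod.card]

/-- if `F : 𝔽₂ⁿ → ℤ_{2^t}^m` is vectorial gbent with `m = n/(2t)`,
then `R = {(x, F(x))}` is a `(2^n, 2^{n/2}, 2^n, 2^{n/2})`-relative difference
set in `𝔽₂ⁿ × ℤ_{2^t}^m` relative to `N = {0} × ℤ_{2^t}^m`: `|R| = 2^n`, every
element outside `N` has exactly `2^{n/2}` representations as a difference
`r₁ − r₂` of elements of `R`, and no nonzero element of `N` has any. -/
theorem stmt14 (n t m : ℕ) (ht : 1 ≤ t) (hm : 1 ≤ m) (hn : n = 2 * t * m)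
    (F : (Fin n → ZMod 2) → Fin m → ZMod (2 ^ t))
    (hF : IsVectorialGbent F) :
    (Finset.univ.image (fun x : Fin n → ZMod 2 => (x, F x))).card = 2 ^ n ∧
    (∀ g : (Fin n → ZMod 2) × (Fin m → ZMod (2 ^ t)), g.1 ≠ 0 →
      (Finset.univ.filter (fun p : (Fin n → ZMod 2) × (Fin n → ZMod 2) =>
        ((p.1, F p.1) : (Fin n → ZMod 2) × (Fin m → ZMod (2 ^ t))) - (p.2, F p.2) = g)).card
        = 2 ^ (n / 2)) ∧
    (∀ g : (Fin n → ZMod 2) × (Fin m → ZMod (2 ^ t)), g.1 = 0 → g ≠ 0 →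
      (Finset.univ.filter (fun p : (Fin n → ZMod 2) × (Fin n → ZMod 2) =>
        ((p.1, F p.1) : (Fin n → ZMod 2) × (Fin m → ZMod (2 ^ t))) - (p.2, F p.2) = g)).card
        = 0) := by
  refine ⟨?_, ?_, ?_⟩
  · rw [Finset.card_image_of_injective _ (fun x y h => (Prod.mk.injEq _ _ _ _ ▸ h : _ ∧ _).1),
      Finset.card_univ]
    simp [ZMod.card]
  · rintro ⟨a, b⟩ hg1
    simp only at hg1
    -- reduce to the count over x
    have hScard : (Finset.univ.filter
        (fun x : Fin n → ZMod 2 => F x - F (x + a) = b)).card = 2 ^ (n / 2) := by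
      have key := count_key F hF hg1 b
      have hne : ((2 : ℂ)) ^ (t * m) ≠ 0 := pow_ne_zero _ two_ne_zero
      have key' : (2 : ℂ) ^ (t * m) * (((Finset.univ.filter
          (fun x : Fin n → ZMod 2 => F x - F (x + a) = b)).card : ℕ) : ℂ)
            = (2 : ℂ) ^ (t * m) * (2 : ℂ) ^ (t * m) := by
        rw [← pow_add]
        calc (2 : ℂ) ^ (t * m) * (((Finset.univ.filter
            (fun x : Fin n → ZMod 2 => F x - F (x + a) = b)).card : ℕ) : ℂ)
            = (((2 ^ t : ℕ) : ℂ)) ^ m * (((Finset.univ.filter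
              (fun x : Fin n → ZMod 2 => F x - F (x + a) = b)).card : ℕ) : ℂ) := by
              push_cast
              rw [← pow_mul]
          _ = (2 : ℂ) ^ n := key
          _ = (2 : ℂ) ^ (t * m + t * m) := by rw [hn]; ring_nf
      have h6 := mul_left_cancel₀ hne key'
      have h7 : (((Finset.univ.filter
          (fun x : Fin n → ZMod 2 => F x - F (x + a) = b)).card : ℕ) : ℂ)
            = ((2 ^ (n / 2) : ℕ) : ℂ) := by
        rw [h6]
        push_cast
        congr 1
        rw [hn, mul_assoc]
        exact (Nat.mul_div_cancel_left _ (by norm_num)).symm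
      exact_mod_cast h7
    rw [← hScard]
    apply Finset.card_nbij' (fun p : (Fin n → ZMod 2) × (Fin n → ZMod 2) => p.1)
      (fun x : Fin n → ZMod 2 => (x, x + a))
    · intro p hp
      simp only [Finset.mem_coe, Finset.mem_filter, Finset.mem_univ, true_and, Prod.mk_sub_mk, Prod.mk.injEq]
        at hp ⊢
      obtain ⟨h1, h2⟩ := hp
      have hp2 : p.2 = p.1 + a := (sub_cond _ _ _).mp h1
      rw [← hp2]
      exact h2
    · intro x hx
      simp only [Finset.mem_coe, Finset.mem_filter, Finset.mem_univ, true_and, Prod.mk_sub_mk, Prod.mk.injEq]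
        at hx ⊢
      exact ⟨(sub_cond _ _ _).mpr rfl, hx⟩
    · intro p hp
      simp only [Finset.mem_coe, Finset.mem_filter, Finset.mem_univ, true_and, Prod.mk_sub_mk, Prod.mk.injEq]
        at hp
      have hp2 : p.2 = p.1 + a := (sub_cond _ _ _).mp hp.1
      exact Prod.ext rfl hp2.symm
    · intro x _
      rfl
  · rintro ⟨a, b⟩ h1 hg
    simp only at h1
    subst h1
    rw [Finset.card_eq_zero, Finset.filter_eq_empty_iff]
    intro p _
    simp only [Prod.mk_sub_mk, Prod.mk.injEq, not_and]
    intro hp1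
    have : p.1 = p.2 := by
      have := (sub_cond p.1 p.2 0).mp hp1
      rw [this, add_zero]
    rw [this, sub_self]
    rintro rfl
    exact hg rfl
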